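/- The function f(q) = Σ_{n ≥ 1} q^{n²}, holomorphic on the open unit disk, does not extend to a holomorphic function on any connected open set strictly containing the unit disk; i.e., the unit circle is a natural boundary for f. -/

import Mathlib

open Finset in
lemma gauss_ne_zero {b : ℕ} (hb : Odd b) (hb0 : 0 < b) {ζ : ℂ}
    (hζ : IsPrimitiveRoot ζ b) : (∑ j ∈ Finset.range b, ζ ^ (j ^ 2)) ≠ 0 := by
  haveI : NeZero b := ⟨hb0.ne'⟩
  have hζ1 : ζ ^ b = 1 := hζ.pow_eq_one
  set ψ : AddChar (ZMod b) ℂ := AddChar.zmodChar b hζ1 with hψdef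
  have hprim : ψ.IsPrimitive := by
    have := AddChar.zmodChar_primitive_of_primitive_root b hζ
    convert this
  have hval : ∀ x : ZMod b, ψ (x ^ 2) = ζ ^ (x.val ^ 2) := by
    intro x
    have h1 : ((x.val ^ 2 : ℕ) : ZMod b) = x ^ 2 := by
      push_cast
      rw [ZMod.natCast_val, ZMod.cast_id]
    rw [← h1, hψdef, AddChar.zmodChar_apply' hζ1]
  have hG : (∑ x : ZMod b, ψ (x ^ 2)) = ∑ j ∈ Finset.range b, ζ ^ (j ^ 2) := by
    refine Finset.sum_nbij' (fun x => x.val) (fun j => (j : ZMod b)) ?_ ?_ ?_ ?_ ?_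
    · intro x _; exact Finset.mem_range.2 (ZMod.val_lt x)
    · intro j _; exact Finset.mem_univ _
    · intro x _; simp only [ZMod.natCast_val, ZMod.cast_id]
    · intro j hj; exact ZMod.val_cast_of_lt (Finset.mem_range.1 hj)
    · intro x _; exact hval x
  have htwo : ∀ d : ZMod b, 2 * d = 0 → d = 0 := by
    intro d hd
    have h2 : IsUnit (2 : ZMod b) := by
      have := (ZMod.isUnit_iff_coprime 2 b).2 (Nat.coprime_two_left.2 hb)
      simpa using this
    exact (h2.mul_right_eq_zero).mp hd
  have key : (∑ x : ZMod b, ψ (x ^ 2)) * (∑ y : ZMod b, ψ (-(y ^ 2))) = b := by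
    rw [Finset.sum_mul_sum]
    have step1 : ∀ x y : ZMod b, ψ (x ^ 2) * ψ (-(y ^ 2)) = ψ (x ^ 2 - y ^ 2) := by
      intro x y
      rw [← AddChar.map_add_eq_mul]; ring_nf
    simp_rw [step1]
    rw [Finset.sum_comm]
    have step2 : ∀ y : ZMod b, (∑ x : ZMod b, ψ (x ^ 2 - y ^ 2)) =
        ∑ d : ZMod b, ψ (d ^ 2) * ψ (y * (2 * d)) := by
      intro y
      rw [← Fintype.sum_equiv (Equiv.addLeft y) _ (fun x => ψ (x ^ 2 - y ^ 2)) (fun d => rfl)]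
      refine Finset.sum_congr rfl fun d _ => ?_
      rw [← AddChar.map_add_eq_mul]
      congr 1
      simp [Equiv.addLeft]
      ring
    simp_rw [step2]
    rw [Finset.sum_comm]
    have step3 : ∀ d : ZMod b, (∑ y : ZMod b, ψ (d ^ 2) * ψ (y * (2 * d))) =
        ψ (d ^ 2) * (if 2 * d = 0 then (b : ℂ) else 0) := by
      intro d
      rw [← Finset.mul_sum, AddChar.sum_mulShift _ hprim]
      simp [ZMod.card]
    simp_rw [step3]
    rw [Finset.sum_eq_single 0]
    · simp
    · intro d _ hd
      rw [if_neg, mul_zero]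
      intro h; exact hd (htwo d h)
    · simp
  intro h
  rw [hG, h, zero_mul] at key
  exact Nat.cast_ne_zero.2 hb0.ne' key.symm

lemma one_sub_pow_le' {r : ℝ} (h0 : 0 ≤ r) (d : ℕ) : 1 - r ^ d ≤ d * (1 - r) := by
  have h := one_add_mul_le_pow (a := r - 1) (by linarith) d
  have : 1 + (d : ℝ) * (r - 1) ≤ r ^ d := by simpa using h
  linarith

lemma block_sum (x : ℝ) (K : ℕ) :
    ∑ k ∈ Finset.range K, ∑ i ∈ Finset.Ico (k ^ 2) ((k + 1) ^ 2), x ^ i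
      = ∑ i ∈ Finset.range (K ^ 2), x ^ i := by
  induction K with
  | zero => simp
  | succ K ih =>
      rw [Finset.sum_range_succ, ih, Finset.range_eq_Ico, Finset.range_eq_Ico]
      exact Finset.sum_Ico_consecutive (fun i => x ^ i) (Nat.zero_le _)
        (Nat.pow_le_pow_left (Nat.le_succ K) 2)

lemma summable_kpow {x : ℝ} (h0 : 0 ≤ x) (h1 : x < 1) :
    Summable (fun k : ℕ => (k + 1 : ℝ) * x ^ (k ^ 2)) := by
  apply Summable.of_nonneg_of_le (fun k => by positivity) (fun k => ?_)
    ((summable_pow_mul_geometric_of_norm_lt_one 1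
      (by rwa [Real.norm_eq_abs, abs_of_nonneg h0])).add
      (summable_geometric_of_lt_one h0 h1))
  have hle : x ^ (k ^ 2) ≤ x ^ k := pow_le_pow_of_le_one h0 h1.le (by nlinarith)
  calc (k + 1 : ℝ) * x ^ (k ^ 2) ≤ (k + 1 : ℝ) * x ^ k :=
        mul_le_mul_of_nonneg_left hle (by positivity)
    _ = (k:ℝ) ^ 1 * x ^ k + x ^ k := by push_cast; ring
    _ ≤ _ := le_refl _

lemma tsum_kpow_le {x : ℝ} (h0 : 0 ≤ x) (h1 : x < 1) :
    ∑' k : ℕ, (k + 1 : ℝ) * x ^ (k ^ 2) ≤ 1 + 3 / (1 - x) := by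
  have hsum := summable_kpow h0 h1
  have hgeom : ∀ K : ℕ, ∑ i ∈ Finset.range K, x ^ i ≤ (1 - x)⁻¹ := by
    intro K
    calc ∑ i ∈ Finset.range K, x ^ i ≤ ∑' i : ℕ, x ^ i :=
          Summable.sum_le_tsum _ (fun i _ => by positivity) (summable_geometric_of_lt_one h0 h1)
      _ = (1 - x)⁻¹ := tsum_geometric_of_lt_one h0 h1
  rw [Summable.tsum_eq_zero_add hsum]
  simp only [pow_zero, mul_one, Nat.cast_zero, zero_add]
  have key : ∀ K : ℕ, ∑ k ∈ Finset.range K, ((k:ℕ) + 1 + 1 : ℝ) * x ^ ((k + 1) ^ 2)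
      ≤ 3 / (1 - x) := by
    intro K
    have step : ∀ k : ℕ, ((k:ℕ) + 1 + 1 : ℝ) * x ^ ((k + 1) ^ 2)
        ≤ 3 * ∑ i ∈ Finset.Ico (k ^ 2) ((k + 1) ^ 2), x ^ i := by
      intro k
      have hcard : (Finset.Ico (k ^ 2) ((k + 1) ^ 2)).card = 2 * k + 1 := by
        rw [Nat.card_Ico]; ring_nf; omega
      have hterm : ∀ i ∈ Finset.Ico (k ^ 2) ((k + 1) ^ 2),
          x ^ ((k + 1) ^ 2) ≤ x ^ i := fun i hi =>
        pow_le_pow_of_le_one h0 h1.le (Finset.mem_Ico.1 hi).2.le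
      have hsum2 : (2 * k + 1 : ℝ) * x ^ ((k + 1) ^ 2)
          ≤ ∑ i ∈ Finset.Ico (k ^ 2) ((k + 1) ^ 2), x ^ i := by
        calc (2 * k + 1 : ℝ) * x ^ ((k + 1) ^ 2)
            = ∑ _i ∈ Finset.Ico (k ^ 2) ((k + 1) ^ 2), x ^ ((k + 1) ^ 2) := by
              rw [Finset.sum_const, hcard]; push_cast; ring
          _ ≤ _ := Finset.sum_le_sum hterm
      have hx : (0:ℝ) ≤ x ^ ((k+1)^2) := by positivity
      nlinarith
    calc ∑ k ∈ Finset.range K, ((k:ℕ) + 1 + 1 : ℝ) * x ^ ((k + 1) ^ 2)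
        ≤ ∑ k ∈ Finset.range K, 3 * ∑ i ∈ Finset.Ico (k ^ 2) ((k + 1) ^ 2), x ^ i :=
          Finset.sum_le_sum fun k _ => step k
      _ = 3 * ∑ i ∈ Finset.range (K ^ 2), x ^ i := by rw [← Finset.mul_sum, block_sum]
      _ ≤ 3 * (1 - x)⁻¹ := by
          have := hgeom (K ^ 2); linarith
      _ = 3 / (1 - x) := by rw [div_eq_mul_inv]
  have hs2 : Summable (fun k : ℕ => ((k:ℕ) + 1 + 1 : ℝ) * x ^ ((k + 1) ^ 2)) := by
    have := (summable_nat_add_iff 1).2 hsum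
    refine this.congr fun k => ?_
    push_cast; ring_nf
  have hle := Summable.tsum_le_of_sum_range_le hs2 key
  have h1x : (0:ℝ) < 1 - x := by linarith
  have : ∑' (k : ℕ), (↑(k + 1) + 1 : ℝ) * x ^ ((k + 1) ^ 2)
      = ∑' (k : ℕ), ((k:ℕ) + 1 + 1 : ℝ) * x ^ ((k + 1) ^ 2) := by
    congr 1; funext k; push_cast; ring_nf
  rw [this]
  linarith

noncomputable def S (b j : ℕ) (r : ℝ) : ℝ := ∑' k : ℕ, r ^ ((k * b + j) ^ 2)

lemma S_summable {b : ℕ} (hb : 0 < b) (j : ℕ) {r : ℝ} (h0 : 0 ≤ r) (h1 : r < 1) :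
    Summable (fun k : ℕ => r ^ ((k * b + j) ^ 2)) := by
  apply Summable.of_nonneg_of_le (fun k => by positivity) (fun k => ?_)
    (summable_geometric_of_lt_one h0 h1)
  refine pow_le_pow_of_le_one h0 h1.le ?_
  calc k ≤ k * b := Nat.le_mul_of_pos_right k hb
    _ ≤ k * b + j := Nat.le_add_right _ _
    _ ≤ (k * b + j) ^ 2 := Nat.le_self_pow two_ne_zero _

lemma S_nonneg {b : ℕ} (j : ℕ) {r : ℝ} (h0 : 0 ≤ r) : 0 ≤ S b j r :=
  tsum_nonneg fun k => by positivity

lemma S_le {b : ℕ} (hb : 0 < b) {j : ℕ} {r : ℝ} (h0 : 0 ≤ r) (h1 : r < 1) :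
    S b j r ≤ S b 0 r := by
  apply Summable.tsum_le_tsum (fun k => ?_) (S_summable hb j h0 h1) (S_summable hb 0 h0 h1)
  exact pow_le_pow_of_le_one h0 h1.le (Nat.pow_le_pow_left (by omega) 2)

lemma S_diff_le {b : ℕ} (hb : 0 < b) {j : ℕ} (hj : j ≤ b) {r : ℝ} (h0 : 0 ≤ r)
    (h1 : r < 1) : S b 0 r - S b j r ≤ 12 * b ^ 2 := by
  have hb1 : (1:ℝ) ≤ b := by exact_mod_cast hb
  have hsub : S b 0 r - S b j r
      = ∑' k : ℕ, (r ^ ((k * b + 0) ^ 2) - r ^ ((k * b + j) ^ 2)) :=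
    (Summable.tsum_sub (S_summable hb 0 h0 h1) (S_summable hb j h0 h1)).symm
  have hterm : ∀ k : ℕ, r ^ ((k * b + 0) ^ 2) - r ^ ((k * b + j) ^ 2)
      ≤ (3 * b ^ 2 * (1 - r)) * ((k + 1 : ℝ) * r ^ (k ^ 2)) := by
    intro k
    have hexp : (k * b + j) ^ 2 = (k * b) ^ 2 + (2 * k * b * j + j ^ 2) := by ring
    set D := 2 * k * b * j + j ^ 2 with hD
    have h2 : r ^ ((k * b + j) ^ 2) = r ^ ((k * b) ^ 2) * r ^ D := by
      rw [hexp, pow_add]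
    have h3 : r ^ ((k * b + 0) ^ 2) - r ^ ((k * b + j) ^ 2)
        = r ^ ((k * b) ^ 2) * (1 - r ^ D) := by
      rw [h2]; ring_nf
    rw [h3]
    have h4 : 1 - r ^ D ≤ D * (1 - r) := one_sub_pow_le' h0 D
    have h5 : r ^ ((k * b) ^ 2) ≤ r ^ (k ^ 2) :=
      pow_le_pow_of_le_one h0 h1.le (Nat.pow_le_pow_left (Nat.le_mul_of_pos_right k hb) 2)
    have h6 : (D : ℝ) ≤ 3 * b ^ 2 * (k + 1) := by
      have : (D : ℝ) = 2 * k * b * j + j ^ 2 := by push_cast [hD]; ring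
      rw [this]
      have hjb : (j : ℝ) ≤ b := by exact_mod_cast hj
      have hk0 : (0:ℝ) ≤ k := Nat.cast_nonneg k
      have hj0 : (0:ℝ) ≤ j := Nat.cast_nonneg j
      have hb0' : (0:ℝ) ≤ b := Nat.cast_nonneg b
      nlinarith [mul_nonneg (mul_nonneg hk0 hb0') (sub_nonneg.2 hjb),
        mul_nonneg (add_nonneg hj0 hb0') (sub_nonneg.2 hjb)]
    have h7 : 0 ≤ 1 - r ^ D := by
      have : r ^ D ≤ 1 := pow_le_one₀ h0 h1.le
      linarith
    have h8 : (0:ℝ) ≤ r ^ ((k*b)^2) := by positivity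
    have h9 : (0:ℝ) ≤ r ^ (k^2) := by positivity
    have h10 : (0:ℝ) ≤ 1 - r := by linarith
    calc r ^ ((k * b) ^ 2) * (1 - r ^ D) ≤ r ^ (k ^ 2) * (D * (1 - r)) := by
          apply mul_le_mul h5 h4 h7 h9
      _ ≤ r ^ (k ^ 2) * ((3 * b ^ 2 * (k + 1)) * (1 - r)) := by
          apply mul_le_mul_of_nonneg_left (by nlinarith) h9
      _ = (3 * b ^ 2 * (1 - r)) * ((k + 1 : ℝ) * r ^ (k ^ 2)) := by ring
  rw [hsub]
  have hsummable_rhs : Summable (fun k : ℕ => (3 * b ^ 2 * (1 - r)) * ((k + 1 : ℝ) * r ^ (k ^ 2))) :=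
    (summable_kpow h0 h1).mul_left _
  have hsummable_lhs : Summable (fun k : ℕ => r ^ ((k * b + 0) ^ 2) - r ^ ((k * b + j) ^ 2)) :=
    (S_summable hb 0 h0 h1).sub (S_summable hb j h0 h1)
  calc ∑' k : ℕ, (r ^ ((k * b + 0) ^ 2) - r ^ ((k * b + j) ^ 2))
      ≤ ∑' k : ℕ, (3 * b ^ 2 * (1 - r)) * ((k + 1 : ℝ) * r ^ (k ^ 2)) :=
        Summable.tsum_le_tsum hterm hsummable_lhs hsummable_rhs
    _ = (3 * b ^ 2 * (1 - r)) * ∑' k : ℕ, ((k + 1 : ℝ) * r ^ (k ^ 2)) := tsum_mul_left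
    _ ≤ (3 * b ^ 2 * (1 - r)) * (1 + 3 / (1 - r)) := by
        apply mul_le_mul_of_nonneg_left (tsum_kpow_le h0 h1) (by nlinarith)
    _ ≤ 12 * b ^ 2 := by
        have h10 : (0:ℝ) < 1 - r := by linarith
        have : (1 - r) * (1 + 3 / (1 - r)) = (1 - r) + 3 := by field_simp
        nlinarith
  
lemma S_lower {b : ℕ} (hb : 0 < b) {r : ℝ} (h0 : 0 ≤ r) (h1 : r < 1) (N : ℕ) :
    (N : ℝ) * r ^ ((N * b) ^ 2) ≤ S b 0 r := by
  calc (N : ℝ) * r ^ ((N * b) ^ 2)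
      = ∑ _k ∈ Finset.range N, r ^ ((N * b) ^ 2) := by
        rw [Finset.sum_const, Finset.card_range]; push_cast; ring
    _ ≤ ∑ k ∈ Finset.range N, r ^ ((k * b + 0) ^ 2) := by
        apply Finset.sum_le_sum
        intro k hk
        apply pow_le_pow_of_le_one h0 h1.le
        have : k ≤ N := (Finset.mem_range.1 hk).le
        refine Nat.pow_le_pow_left ?_ 2
        have h := Nat.mul_le_mul this (Nat.le_refl b)
        omega
    _ ≤ S b 0 r := Summable.sum_le_tsum _ (fun k _ => by positivity) (S_summable hb 0 h0 h1)


lemma norm_zeta_eq_one {b : ℕ} (hb : 0 < b) {ζ : ℂ} (hζ1 : ζ ^ b = 1) : ‖ζ‖ = 1 := by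
  have h : ‖ζ‖ ^ b = 1 := by rw [← norm_pow, hζ1, norm_one]
  have h0 : 0 ≤ ‖ζ‖ := norm_nonneg _
  rcases (pow_eq_one_iff_cases).1 h with h' | h' | h' <;> first | omega | assumption | nlinarith

lemma summable_q {q : ℂ} (hq : ‖q‖ < 1) : Summable (fun m : ℕ => q ^ (m ^ 2)) := by
  apply Summable.of_norm_bounded (summable_geometric_of_lt_one (norm_nonneg q) hq)
  intro m
  rw [norm_pow]
  exact pow_le_pow_of_le_one (norm_nonneg q) hq.le (Nat.le_self_pow two_ne_zero m)

lemma decomp {b : ℕ} (hb : 0 < b) {ζ : ℂ} (hζ1 : ζ ^ b = 1) {r : ℝ} (h0 : 0 ≤ r)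
    (h1 : r < 1) :
    (∑' n : ℕ, ((r : ℂ) * ζ) ^ ((n + 1) ^ 2))
      = (∑ j ∈ Finset.range b, ζ ^ (j ^ 2) * (S b j r : ℂ)) - 1 := by
  haveI : NeZero b := ⟨hb.ne'⟩
  set q : ℂ := (r : ℂ) * ζ with hqdef
  have hζn : ‖ζ‖ = 1 := norm_zeta_eq_one hb hζ1
  have hq : ‖q‖ < 1 := by
    rw [hqdef, norm_mul, hζn, mul_one, Complex.norm_real, Real.norm_eq_abs,
      abs_of_nonneg h0]
    exact h1
  have hsum : Summable (fun m : ℕ => q ^ (m ^ 2)) := summable_q hq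
  -- step 1 : shift
  have hshift : (∑' m : ℕ, q ^ (m ^ 2)) = 1 + ∑' n : ℕ, q ^ ((n + 1) ^ 2) := by
    rw [Summable.tsum_eq_zero_add hsum]; norm_num
  -- step 2 : split into residues
  have hsplit : (∑' m : ℕ, q ^ (m ^ 2))
      = ∑ j ∈ Finset.range b, ∑' k : ℕ, q ^ ((k * b + j) ^ 2) := by
    have e1 : (∑' p : ℕ × Fin b, q ^ (((Nat.divModEquiv b).symm p) ^ 2))
        = ∑' m : ℕ, q ^ (m ^ 2) := Equiv.tsum_eq (Nat.divModEquiv b).symm (fun m => q ^ (m ^ 2))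
    have hsum2 : Summable (fun p : ℕ × Fin b => q ^ (((Nat.divModEquiv b).symm p) ^ 2)) := by
      exact ((Nat.divModEquiv b).symm.summable_iff (f := fun m => q ^ (m ^ 2))).2 hsum
    have e2 : (∑' p : Fin b × ℕ, q ^ (((Nat.divModEquiv b).symm (p.2, p.1)) ^ 2))
        = ∑' p : ℕ × Fin b, q ^ (((Nat.divModEquiv b).symm p) ^ 2) :=
      Equiv.tsum_eq (Equiv.prodComm (Fin b) ℕ)
        (fun p : ℕ × Fin b => q ^ (((Nat.divModEquiv b).symm p) ^ 2))
    have hsum3 : Summable (fun p : Fin b × ℕ => q ^ (((Nat.divModEquiv b).symm (p.2, p.1)) ^ 2)) :=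
      ((Equiv.prodComm (Fin b) ℕ).summable_iff
        (f := fun p : ℕ × Fin b => q ^ (((Nat.divModEquiv b).symm p) ^ 2))).2 hsum2
    rw [← e1, ← e2, Summable.tsum_prod' hsum3 (fun j => by
      exact (hsum3.prod_factor j))]
    rw [tsum_fintype]
    rw [← Fin.sum_univ_eq_sum_range (fun j => ∑' k : ℕ, q ^ ((k * b + j) ^ 2)) b]
    rfl
  -- step 3 : each residue sum
  have hres : ∀ j, j < b → (∑' k : ℕ, q ^ ((k * b + j) ^ 2))
      = ζ ^ (j ^ 2) * (S b j r : ℂ) := by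
    intro j hj
    have hpt : ∀ k : ℕ, q ^ ((k * b + j) ^ 2)
        = ζ ^ (j ^ 2) * ((r ^ ((k * b + j) ^ 2) : ℝ) : ℂ) := by
      intro k
      have hmod : ζ ^ ((k * b + j) ^ 2) = ζ ^ (j ^ 2) := by
        rw [pow_eq_pow_mod _ hζ1, pow_eq_pow_mod (j ^ 2) hζ1]
        congr 1
        have : (k * b + j) % b = j % b := by rw [Nat.add_comm, Nat.add_mul_mod_self_right]
        calc (k * b + j) ^ 2 % b = ((k * b + j) % b) ^ 2 % b := by
              rw [Nat.pow_mod]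
          _ = (j % b) ^ 2 % b := by rw [this]
          _ = j ^ 2 % b := by rw [← Nat.pow_mod]
      rw [hqdef, mul_pow, hmod, Complex.ofReal_pow]
      ring
    calc (∑' k : ℕ, q ^ ((k * b + j) ^ 2))
        = ∑' k : ℕ, ζ ^ (j ^ 2) * ((r ^ ((k * b + j) ^ 2) : ℝ) : ℂ) := by
          exact tsum_congr hpt
      _ = ζ ^ (j ^ 2) * ∑' k : ℕ, ((r ^ ((k * b + j) ^ 2) : ℝ) : ℂ) := tsum_mul_left
      _ = ζ ^ (j ^ 2) * (S b j r : ℂ) := by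
          rw [← Complex.ofReal_tsum]; rfl
  have : (∑ j ∈ Finset.range b, ∑' k : ℕ, q ^ ((k * b + j) ^ 2))
      = ∑ j ∈ Finset.range b, ζ ^ (j ^ 2) * (S b j r : ℂ) :=
    Finset.sum_congr rfl fun j hj => hres j (Finset.mem_range.1 hj)
  rw [← this, ← hsplit, hshift]
  ring
lemma blowup {b : ℕ} (hb : 0 < b) {ζ : ℂ} (hζ1 : ζ ^ b = 1)
    (hG : (∑ j ∈ Finset.range b, ζ ^ (j ^ 2)) ≠ 0) (M δ : ℝ) (hδ : 0 < δ) :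
    ∃ r : ℝ, 0 ≤ r ∧ 1 - δ < r ∧ r < 1 ∧
      M < ‖∑' n : ℕ, ((r : ℂ) * ζ) ^ ((n + 1) ^ 2)‖ := by
  set G : ℂ := ∑ j ∈ Finset.range b, ζ ^ (j ^ 2) with hGdef
  have hc : 0 < ‖G‖ := norm_pos_iff.2 hG
  set c := ‖G‖ with hcdef
  set N : ℕ := ⌈2 * (M + 12 * (b:ℝ) ^ 3 + 2) / c⌉₊ + 1 with hNdef
  have hN1 : 1 ≤ N := Nat.le_add_left 1 _
  have hNlb : 2 * (M + 12 * (b:ℝ) ^ 3 + 2) / c ≤ N := by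
    calc 2 * (M + 12 * (b:ℝ) ^ 3 + 2) / c ≤ ⌈2 * (M + 12 * (b:ℝ) ^ 3 + 2) / c⌉₊ :=
          Nat.le_ceil _
      _ ≤ N := by rw [hNdef]; push_cast; linarith
  have hcN : M + 12 * (b:ℝ) ^ 3 + 2 ≤ c * N / 2 := by
    rw [div_le_iff₀ hc] at hNlb
    linarith
  set K : ℕ := (N * b) ^ 2 with hKdef
  have hK1 : 1 ≤ K := by
    have h1 : 1 ≤ N * b := Nat.one_le_iff_ne_zero.2 (by positivity)
    exact Nat.one_le_iff_ne_zero.2 (by positivity)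
  set x : ℝ := min (δ / 2) (1 / (2 * K)) with hxdef
  have hx0 : 0 < x := lt_min (by linarith) (by positivity)
  have hxhalf : x ≤ 1 / 2 := by
    calc x ≤ 1 / (2 * K) := min_le_right _ _
      _ ≤ 1 / 2 := by
        apply div_le_div_of_nonneg_left (by norm_num) (by norm_num)
        have h2 : (1:ℝ) ≤ K := by exact_mod_cast hK1
        linarith
  set r : ℝ := 1 - x with hrdef
  have hr0 : 0 ≤ r := by rw [hrdef]; linarith
  have hr1 : r < 1 := by rw [hrdef]; linarith
  have hrδ : 1 - δ < r := by
    have h3 : x ≤ δ / 2 := min_le_left _ _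
    rw [hrdef]; linarith
  refine ⟨r, hr0, hrδ, hr1, ?_⟩
  have hrK : (1:ℝ)/2 ≤ r ^ K := by
    have h := one_sub_pow_le' hr0 K
    have hxK : (K:ℝ) * x ≤ 1 / 2 := by
      have hxK' : x ≤ 1 / (2 * K) := min_le_right _ _
      have hKpos : (0:ℝ) < K := by exact_mod_cast hK1
      rw [le_div_iff₀ (by positivity)] at hxK'
      nlinarith
    have h4 : 1 - r = x := by rw [hrdef]; ring
    rw [h4] at h
    linarith
  have hS0 : (N:ℝ) / 2 ≤ S b 0 r := by
    have h := S_lower hb hr0 hr1 N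
    have hN0 : (0:ℝ) ≤ N := Nat.cast_nonneg N
    calc (N:ℝ) / 2 = N * (1/2) := by ring
      _ ≤ N * r ^ ((N * b) ^ 2) := by
          apply mul_le_mul_of_nonneg_left _ hN0
          rw [← hKdef]; exact hrK
      _ ≤ S b 0 r := h
  rw [decomp hb hζ1 hr0 hr1]
  set E : ℂ := (∑ j ∈ Finset.range b, ζ ^ (j ^ 2) * ((S b j r - S b 0 r : ℝ) : ℂ)) - 1
    with hEdef
  have hsplit : (∑ j ∈ Finset.range b, ζ ^ (j ^ 2) * (S b j r : ℂ)) - 1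
      = G * (S b 0 r : ℂ) + E := by
    rw [hEdef, hGdef]
    have h5 : ∀ j ∈ Finset.range b, ζ ^ (j ^ 2) * ((S b j r - S b 0 r : ℝ) : ℂ)
        = ζ ^ (j ^ 2) * (S b j r : ℂ) - ζ ^ (j ^ 2) * (S b 0 r : ℂ) := by
      intro j _; push_cast; ring
    rw [Finset.sum_congr rfl h5, Finset.sum_sub_distrib, ← Finset.sum_mul]
    ring
  rw [hsplit]
  have hζn : ‖ζ‖ = 1 := norm_zeta_eq_one hb hζ1
  have herr : ‖E‖ ≤ 12 * (b:ℝ) ^ 3 + 1 := by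
    rw [hEdef]
    calc ‖(∑ j ∈ Finset.range b, ζ ^ (j ^ 2) * ((S b j r - S b 0 r : ℝ) : ℂ)) - 1‖
        ≤ ‖∑ j ∈ Finset.range b, ζ ^ (j ^ 2) * ((S b j r - S b 0 r : ℝ) : ℂ)‖ + ‖(1:ℂ)‖ :=
          norm_sub_le _ _
      _ ≤ (∑ j ∈ Finset.range b, ‖ζ ^ (j ^ 2) * ((S b j r - S b 0 r : ℝ) : ℂ)‖) + 1 := by
          have := norm_sum_le (Finset.range b)
            (fun j => ζ ^ (j ^ 2) * ((S b j r - S b 0 r : ℝ) : ℂ))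
          simp only [norm_one]
          linarith
      _ ≤ (∑ _j ∈ Finset.range b, (12 * (b:ℝ) ^ 2)) + 1 := by
          apply add_le_add_left
          apply Finset.sum_le_sum
          intro j hj
          rw [norm_mul, norm_pow, hζn, one_pow, one_mul, Complex.norm_real,
            Real.norm_eq_abs, abs_sub_comm, abs_of_nonneg (by
              have := S_le hb (j := j) hr0 hr1; linarith)]
          exact S_diff_le hb (Finset.mem_range.1 hj).le hr0 hr1
      _ = 12 * (b:ℝ) ^ 3 + 1 := by
          rw [Finset.sum_const, Finset.card_range, nsmul_eq_mul]; ring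
  have hGS : c * ((N:ℝ) / 2) ≤ ‖G * (S b 0 r : ℂ)‖ := by
    rw [norm_mul, Complex.norm_real, Real.norm_eq_abs,
      abs_of_nonneg (S_nonneg 0 hr0)]
    exact mul_le_mul_of_nonneg_left hS0 hc.le
  have htri : ‖G * (S b 0 r : ℂ)‖ - ‖E‖ ≤ ‖G * (S b 0 r : ℂ) + E‖ := by
    have := norm_add_le (G * (S b 0 r : ℂ) + E) (-E)
    simp only [add_neg_cancel_right, norm_neg] at this
    linarith
  have : c * N / 2 ≤ ‖G * (S b 0 r : ℂ)‖ := by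
    calc c * N / 2 = c * ((N:ℝ)/2) := by ring
      _ ≤ _ := hGS
  linarith

open Complex Real

lemma exists_root_near {z₀ : ℂ} (hz : ‖z₀‖ = 1) {ε : ℝ} (hε : 0 < ε) :
    ∃ (b : ℕ) (ζ : ℂ), 0 < b ∧ Odd b ∧ IsPrimitiveRoot ζ b ∧ ‖ζ - z₀‖ < ε := by
  obtain ⟨k, hk⟩ := pow_unbounded_of_one_lt (max (8 * π / ε) (4 * π)) (by norm_num : (1:ℝ) < 3)
  set b : ℕ := 3 ^ (k + 1) with hbdef
  have hb0 : 0 < b := by positivity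
  have hbR : (0:ℝ) < b := by exact_mod_cast hb0
  have hbig : max (8 * π / ε) (4 * π) < b := by
    calc max (8 * π / ε) (4 * π) < (3:ℝ) ^ k := hk
      _ ≤ (3:ℝ) ^ (k+1) := by
          apply pow_le_pow_right₀ (by norm_num) (Nat.le_succ k)
      _ = b := by rw [hbdef]; push_cast; ring
  have hb4π : 4 * π < b := lt_of_le_of_lt (le_max_right _ _) hbig
  have hb8πε : 8 * π / ε < b := lt_of_le_of_lt (le_max_left _ _) hbig
  have hπ := Real.pi_pos
  -- the angle
  set θ : ℝ := Complex.arg z₀ with hθdef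
  have hz₀ : z₀ = Complex.exp (θ * I) := by
    have := Complex.norm_mul_exp_arg_mul_I z₀
    rw [hz] at this
    simpa using this.symm
  set t : ℝ := θ * b / (2 * π) with htdef
  set p₀ : ℤ := ⌊t⌋ with hp₀def
  set p : ℤ := if (3:ℤ) ∣ p₀ then p₀ + 1 else p₀ with hpdef
  have hpnd : ¬ (3:ℤ) ∣ p := by
    rw [hpdef]
    split_ifs with h
    · omega
    · exact h
  have hpt : |(p:ℝ) - t| ≤ 2 := by
    have h1 := Int.floor_le t
    have h2 := Int.lt_floor_add_one t
    rw [hpdef]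
    split_ifs <;> push_cast <;> rw [abs_le] <;> constructor <;> linarith
  -- reduce p mod b
  set p' : ℕ := (p % (b:ℤ)).toNat with hp'def
  have hpmod : (p % (b:ℤ)) = (p' : ℤ) := by
    rw [hp'def, Int.toNat_of_nonneg (Int.emod_nonneg p (by exact_mod_cast hb0.ne'))]
  have hp'nd : ¬ (3:ℤ) ∣ (p' : ℤ) := by
    intro h3
    apply hpnd
    have hdvd : (3:ℤ) ∣ (b:ℤ) := by
      rw [hbdef]; push_cast
      exact Dvd.intro_left (3 ^ k) (by ring)
    have : p = (b:ℤ) * (p / b) + p % b := (Int.mul_ediv_add_emod p b).symm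
    rw [this, hpmod]
    exact dvd_add (hdvd.mul_right _) h3
  have hcop : Nat.Coprime p' b := by
    rw [hbdef]
    apply Nat.Coprime.pow_right
    rw [Nat.coprime_comm]
    rw [Nat.Prime.coprime_iff_not_dvd (by norm_num)]
    intro h
    exact hp'nd (by exact_mod_cast Int.natCast_dvd_natCast.2 h)
  -- the root
  set ζ : ℂ := Complex.exp (2 * π * I / b) ^ p' with hζdef
  have hprim : IsPrimitiveRoot ζ b :=
    (Complex.isPrimitiveRoot_exp b hb0.ne').pow_of_coprime p' hcop
  refine ⟨b, ζ, hb0, ?_, hprim, ?_⟩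
  · rw [hbdef]; exact Odd.pow ⟨1, by norm_num⟩
  -- distance estimate
  have hζ2 : ζ = Complex.exp ((2 * π * p' / b) * I) := by
    rw [hζdef, ← Complex.exp_nat_mul]
    congr 1
    push_cast
    field_simp
  -- relate p' to p : exp(2πp'/b I) = exp(2πp/b I)
  have hζ3 : ζ = Complex.exp ((2 * π * p / b) * I) := by
    rw [hζ2]
    have hdiv : p = (b:ℤ) * (p / b) + (p' : ℤ) := by
      rw [← hpmod]; exact (Int.mul_ediv_add_emod p b).symm
    have hkey : ((2 * π * p / b) * I : ℂ) = (2 * π * p' / b) * I + (((p / (b:ℤ)) : ℤ) : ℂ) * (2 * π * I) := by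
      have hbne : (b:ℂ) ≠ 0 := by exact_mod_cast (Nat.cast_ne_zero (R := ℂ)).2 hb0.ne'
      have hp_eq : (p : ℂ) = (b : ℂ) * (((p / (b:ℤ)) : ℤ) : ℂ) + (p' : ℂ) := by
        exact_mod_cast congrArg (Int.cast : ℤ → ℂ) hdiv
      field_simp
      linear_combination hp_eq
    rw [hkey, Complex.exp_add, Complex.exp_int_mul_two_pi_mul_I, mul_one]
  rw [hζ3, hz₀]
  set u : ℝ := 2 * π * p / b - θ with hudef
  have hu : |u| ≤ 4 * π / b := by
    have : u = (2 * π / b) * ((p:ℝ) - t) := by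
      rw [hudef, htdef]; field_simp
    rw [this, abs_mul]
    have h2πb : |2 * π / b| = 2 * π / b := abs_of_pos (by positivity)
    rw [h2πb]
    calc 2 * π / b * |(p:ℝ) - t| ≤ 2 * π / b * 2 := by
          apply mul_le_mul_of_nonneg_left hpt (by positivity)
      _ = 4 * π / b := by ring
  have hfactor : Complex.exp ((2 * π * p / b) * I) - Complex.exp (θ * I)
      = Complex.exp (θ * I) * (Complex.exp ((u:ℝ) * I) - 1) := by
    rw [mul_sub, mul_one, ← Complex.exp_add, hudef]
    push_cast
    ring_nf
  rw [hfactor, norm_mul]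
  have hnormθ : ‖Complex.exp (θ * I)‖ = 1 := by
    rw [Complex.norm_exp]
    simp
  rw [hnormθ, one_mul]
  have huI : ‖((u:ℝ):ℂ) * I‖ ≤ 1 := by
    rw [norm_mul, Complex.norm_I, mul_one, Complex.norm_real, Real.norm_eq_abs]
    calc |u| ≤ 4 * π / b := hu
      _ ≤ 1 := by
        rw [div_le_one hbR]; linarith
  have := Complex.norm_exp_sub_one_le huI
  calc ‖Complex.exp ((u:ℝ) * I) - 1‖ ≤ 2 * ‖((u:ℝ):ℂ) * I‖ := this
    _ = 2 * |u| := by rw [norm_mul, Complex.norm_I, mul_one, Complex.norm_real, Real.norm_eq_abs]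
    _ ≤ 2 * (4 * π / b) := by linarith [hu]
    _ < ε := by
        have h8 : 2 * (4 * π / (b:ℝ)) = 8 * π / b := by ring
        rw [h8, div_lt_iff₀ hbR]
        nlinarith [(div_lt_iff₀ hε).1 hb8πε]
/-- The function `f(q) = ∑_{n ≥ 1} q^(n²)`, holomorphic on the open unit disk, has the
unit circle as a natural boundary: it extends holomorphically to no connected open set
strictly containing the unit disk. -/
theorem lacunary_natural_boundary :
    ¬ ∃ (U : Set ℂ) (g : ℂ → ℂ), IsOpen U ∧ IsConnected U ∧ Metric.ball (0 : ℂ) 1 ⊂ U ∧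
      DifferentiableOn ℂ g U ∧
      Set.EqOn g (fun q => ∑' n : ℕ, q ^ ((n + 1) ^ 2)) (Metric.ball (0 : ℂ) 1) := by
  rintro ⟨U, g, hUopen, hUconn, hUsub, hgdiff, hgeq⟩
  -- find a point of U on the unit circle
  obtain ⟨x, hxU, hxnb⟩ := Set.exists_of_ssubset hUsub
  have hcircle : ∃ z₀ ∈ U, ‖z₀‖ = 1 := by
    by_contra h
    push_neg at h
    have hop2 : IsOpen {z : ℂ | 1 < ‖z‖} := isOpen_lt continuous_const continuous_norm
    have hcover : U ⊆ Metric.ball (0:ℂ) 1 ∪ {z : ℂ | 1 < ‖z‖} := by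
      intro z hz
      rcases lt_trichotomy ‖z‖ 1 with h1 | h1 | h1
      · left; rwa [Metric.mem_ball, dist_zero_right]
      · exact absurd h1 (h z hz)
      · right; exact h1
    have h1 : (U ∩ Metric.ball (0:ℂ) 1).Nonempty :=
      ⟨0, hUsub.1 (Metric.mem_ball_self one_pos), Metric.mem_ball_self one_pos⟩
    have h2 : (U ∩ {z : ℂ | 1 < ‖z‖}).Nonempty := by
      refine ⟨x, hxU, ?_⟩
      have hx1 : ¬ ‖x‖ < 1 := by
        intro hlt
        exact hxnb (by rwa [Metric.mem_ball, dist_zero_right])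
      have hx2 : ‖x‖ ≠ 1 := h x hxU
      simp only [Set.mem_setOf_eq]
      rcases lt_trichotomy ‖x‖ 1 with h' | h' | h'
      · exact absurd h' hx1
      · exact absurd h' hx2
      · exact h'
    obtain ⟨y, hyU, hy1, hy2⟩ := hUconn.isPreconnected (Metric.ball (0:ℂ) 1) {z : ℂ | 1 < ‖z‖} Metric.isOpen_ball hop2 hcover h1 h2
    rw [Metric.mem_ball, dist_zero_right] at hy1
    rw [Set.mem_setOf_eq] at hy2
    linarith
  obtain ⟨z₀, hz₀U, hz₀⟩ := hcircle
  -- continuity and local bound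
  have hgc : ContinuousOn g U := hgdiff.continuousOn
  have hcont : ContinuousAt g z₀ := hgc.continuousAt (hUopen.mem_nhds hz₀U)
  obtain ⟨ε₂, hε₂, hg1⟩ := Metric.continuousAt_iff.1 hcont 1 one_pos
  set ε : ℝ := min 1 ε₂ with hεdef
  have hε : 0 < ε := lt_min one_pos hε₂
  set M : ℝ := ‖g z₀‖ + 1 with hMdef
  -- a root of unity near z₀
  obtain ⟨b, ζ, hb, hodd, hprim, hζnear⟩ := exists_root_near hz₀ (show (0:ℝ) < ε / 2 by linarith)
  have hζ1 : ζ ^ b = 1 := hprim.pow_eq_one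
  have hG := gauss_ne_zero hodd hb hprim
  obtain ⟨r, hr0, hrδ, hr1, hM⟩ := blowup hb hζ1 hG M (ε / 2) (by linarith)
  set q : ℂ := (r : ℂ) * ζ with hqdef
  have hζn : ‖ζ‖ = 1 := norm_zeta_eq_one hb hζ1
  have hqn : ‖q‖ = r := by
    rw [hqdef, norm_mul, hζn, mul_one, Complex.norm_real, Real.norm_eq_abs, _root_.abs_of_nonneg hr0]
  have hq_ball : q ∈ Metric.ball (0:ℂ) 1 := by
    rw [Metric.mem_ball, dist_zero_right, hqn]; exact hr1
  have hq_near : dist q z₀ < ε₂ := by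
    have h1 : ‖q - ζ‖ = 1 - r := by
      have : q - ζ = ((r:ℂ) - 1) * ζ := by rw [hqdef]; ring
      rw [this, norm_mul, hζn, mul_one]
      have : ((r:ℂ) - 1) = ((r - 1 : ℝ) : ℂ) := by push_cast; ring
      rw [this, Complex.norm_real, Real.norm_eq_abs, abs_of_nonpos (by linarith)]
      ring
    calc dist q z₀ ≤ dist q ζ + dist ζ z₀ := dist_triangle _ _ _
      _ = ‖q - ζ‖ + ‖ζ - z₀‖ := by rw [dist_eq_norm, dist_eq_norm]
      _ < (1 - (1 - ε/2)) + ε/2 := by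
          apply add_lt_add
          · rw [h1]; linarith
          · exact hζnear
      _ = ε := by ring
      _ ≤ ε₂ := min_le_right _ _
  have hgq := hg1 hq_near
  have hgval : g q = ∑' n : ℕ, q ^ ((n + 1) ^ 2) := hgeq hq_ball
  rw [hgval] at hgq
  have : ‖∑' n : ℕ, q ^ ((n + 1) ^ 2)‖ ≤ ‖g z₀‖ + 1 := by
    have h := dist_triangle (∑' n : ℕ, q ^ ((n + 1) ^ 2)) (g z₀) 0
    rw [dist_zero_right] at h
    calc ‖∑' n : ℕ, q ^ ((n + 1) ^ 2)‖
        ≤ dist (∑' n : ℕ, q ^ ((n + 1) ^ 2)) (g z₀) + ‖g z₀‖ := by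
          rw [dist_eq_norm]
          have := norm_add_le ((∑' n : ℕ, q ^ ((n + 1) ^ 2)) - g z₀) (g z₀)
          simpa using this
      _ ≤ ‖g z₀‖ + 1 := by linarith [le_of_lt hgq]
  rw [hqdef] at hM
  rw [hMdef] at hM
  linarith
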